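/- Let n, q, c be integers with n ≥ 1, q ≥ 1 and 1 ≤ c ≤ q, and let ε, α be real numbers with 0 < ε < α ≤ 1/3. Let b = ⌊(α − ε)·n⌋ and assume b ≥ 1, and let s = ⌈((2α − ε)/ε²)·((n·ln 2)/c + ln q)⌉. Then c·s·(α·n − b)² / (n·(α·n + b)) ≥ n·ln 2 + c·ln q. -/

import Mathlib

/-- For integers `n, q ≥ 1`, `1 ≤ c ≤ q`, reals `0 < ε < α ≤ 1/3`, with
`b = ⌊(α − ε)n⌋ ≥ 1` and `s = ⌈((2α − ε)/ε²)((n ln 2)/c + ln q)⌉`, we have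
`cs(αn − b)²/(n(αn + b)) ≥ n ln 2 + c ln q`. -/
theorem chernoff_exponent_bound_committees (n q c : ℕ) (ε α : ℝ) (hn : 1 ≤ n)
    (hq : 1 ≤ q) (hc1 : 1 ≤ c) (hcq : c ≤ q) (hε : 0 < ε) (hεα : ε < α)
    (hα : α ≤ 1 / 3) (b s : ℤ) (hb : b = ⌊(α - ε) * (n : ℝ)⌋) (hb1 : 1 ≤ b)
    (hs : s = ⌈((2 * α - ε) / ε ^ 2) * (((n : ℝ) * Real.log 2) / (c : ℝ) + Real.log q)⌉) :
    (c : ℝ) * (s : ℝ) * (α * (n : ℝ) - (b : ℝ)) ^ 2 /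
        ((n : ℝ) * (α * (n : ℝ) + (b : ℝ)))
      ≥ (n : ℝ) * Real.log 2 + (c : ℝ) * Real.log q := by
  have hn' : (1:ℝ) ≤ (n:ℝ) := by exact_mod_cast hn
  have hc' : (1:ℝ) ≤ (c:ℝ) := by exact_mod_cast hc1
  have hq' : (1:ℝ) ≤ (q:ℝ) := by exact_mod_cast hq
  have hα0 : 0 < α := hε.trans hεα
  have h2αε : 0 < 2*α - ε := by linarith
  have hb' : (b:ℝ) ≤ (α - ε) * (n:ℝ) := by
    rw [hb]; exact Int.floor_le _
  have hb1' : (1:ℝ) ≤ (b:ℝ) := by exact_mod_cast hb1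
  have hεn : ε * (n:ℝ) ≤ α * (n:ℝ) - (b:ℝ) := by nlinarith
  have hεnpos : 0 < ε * (n:ℝ) := by positivity
  have hdenpos : 0 < (n:ℝ) * (α * (n:ℝ) + (b:ℝ)) := by nlinarith
  have hlog2 : 0 < Real.log 2 := Real.log_pos (by norm_num)
  have hlogq : 0 ≤ Real.log q := Real.log_nonneg hq'
  set T : ℝ := (n:ℝ) * Real.log 2 + (c:ℝ) * Real.log q with hT
  have hT0 : 0 ≤ T := add_nonneg (mul_nonneg (by positivity) hlog2.le)
    (mul_nonneg (by positivity) hlogq)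
  set A : ℝ := ((2 * α - ε) / ε ^ 2) * (((n : ℝ) * Real.log 2) / (c : ℝ) + Real.log q) with hA
  have hsA : A ≤ (s:ℝ) := by rw [hs]; exact Int.le_ceil _
  have hA0 : 0 ≤ A := mul_nonneg (div_nonneg h2αε.le (sq_nonneg ε))
    (add_nonneg (div_nonneg (mul_nonneg (by positivity) hlog2.le) (by positivity)) hlogq)
  have hcs0 : 0 ≤ (c:ℝ) * (s:ℝ) :=
    le_trans (mul_nonneg (by positivity : (0:ℝ) ≤ (c:ℝ)) hA0)
      (mul_le_mul_of_nonneg_left hsA (by positivity))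
  have h2 : (2*α-ε) * T * (n:ℝ)^2 = (c:ℝ) * A * (ε * (n:ℝ))^2 := by
    rw [hA, hT]
    field_simp
  have h1 : T * ((n:ℝ) * (α * (n:ℝ) + (b:ℝ))) ≤ (2*α-ε) * T * (n:ℝ)^2 := by
    have hub : α * (n:ℝ) + (b:ℝ) ≤ (2*α-ε) * (n:ℝ) := by nlinarith
    nlinarith [mul_le_mul_of_nonneg_left hub (mul_nonneg hT0 (by positivity : (0:ℝ) ≤ (n:ℝ)))]
  have h3 : (c:ℝ) * A * (ε * (n:ℝ))^2 ≤ (c:ℝ) * (s:ℝ) * (ε * (n:ℝ))^2 :=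
    mul_le_mul_of_nonneg_right (mul_le_mul_of_nonneg_left hsA (by positivity)) (sq_nonneg _)
  have h4 : (c:ℝ) * (s:ℝ) * (ε * (n:ℝ))^2 ≤ (c:ℝ) * (s:ℝ) * (α * (n:ℝ) - (b:ℝ))^2 :=
    mul_le_mul_of_nonneg_left (pow_le_pow_left₀ hεnpos.le hεn 2) hcs0
  rw [ge_iff_le, le_div_iff₀ hdenpos]
  linarith
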